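/- Let (z_n) be defined by z_n = exp(Σ_{i=0}^{τ∧n − 1} g(X_i)) · v(X_{τ∧n}), where (X_n) is a Markov chain with transition operator P, v is bounded measurable with v(x) = e^{g(x)} Pv(x) for all x in the set {v < e^G}, and τ = inf{ n ≥ 0 : v(X_n) = e^{G(X_n)} }. Then (z_n) is a martingale with respect to the natural filtration under P_x, for every starting point x. -/

import Mathlib

open MeasureTheory

set_option maxHeartbeats 1000000

theorem stopped_exponential_value_martingale
    {Ω E : Type*} {m : MeasurableSpace Ω} [MeasurableSpace E]
    (μ : Measure Ω) [IsProbabilityMeasure μ]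
    (𝒢 : Filtration ℕ m)
    (X : ℕ → Ω → E) (hXadapted : ∀ n, Measurable[𝒢 n] (X n))
    (hXm : ∀ n, Measurable (X n))
    (P : (E → ℝ) → (E → ℝ))
    (g G v : E → ℝ) (hgm : Measurable g) (hGm : Measurable G) (hvm : Measurable v)
    (hg : ∀ e, 0 ≤ g e) (hG : ∀ e, 0 ≤ G e)
    (Cg CG Cv : ℝ) (hgb : ∀ e, |g e| ≤ Cg) (hGb : ∀ e, |G e| ≤ CG)
    (hvb : ∀ e, |v e| ≤ Cv)
    (hMarkov : ∀ n, μ[(fun ω => v (X (n + 1) ω)) | 𝒢 n]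
        =ᵐ[μ] fun ω => P v (X n ω))
    (hBellman : ∀ e, v e < Real.exp (G e) → v e = Real.exp (g e) * P v e)
    (hBellman' : ∀ e, v e ≤ Real.exp (G e))
    (τ : Ω → ℕ)
    (hτ : ∀ ω, τ ω = sInf {n : ℕ | v (X n ω) = Real.exp (G (X n ω))})
    (hτfin : ∀ ω, {n : ℕ | v (X n ω) = Real.exp (G (X n ω))}.Nonempty)
    (hstop : IsStoppingTime 𝒢 (fun ω => (τ ω : WithTop ℕ))) :
    Martingale
      (fun n ω =>
        Real.exp (∑ i ∈ Finset.range (min (τ ω) n), g (X i ω)) * v (X (min (τ ω) n) ω))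
      𝒢 μ := by
  have hstop_le : ∀ n, MeasurableSet[𝒢 n] {ω | τ ω ≤ n} := fun n => by simpa using hstop n
  -- nonemptiness and nonnegativity of bounds
  have hΩ : Nonempty Ω := by
    by_contra h
    rw [not_nonempty_iff] at h
    have h1 : μ Set.univ = 1 := measure_univ
    rw [Set.univ_eq_empty_iff.mpr h, measure_empty] at h1
    exact zero_ne_one h1
  obtain ⟨ω₀⟩ := hΩ
  have hCg : 0 ≤ Cg := le_trans (abs_nonneg _) (hgb (X 0 ω₀))
  have hCv : 0 ≤ Cv := le_trans (abs_nonneg _) (hvb (X 0 ω₀))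
  set Z : ℕ → Ω → ℝ := fun n ω =>
      Real.exp (∑ i ∈ Finset.range (min (τ ω) n), g (X i ω)) * v (X (min (τ ω) n) ω) with hZ
  -- measurability of Z n w.r.t. 𝒢 n
  have hZmeas : ∀ n, Measurable[𝒢 n] (Z n) := by
    intro n
    have hrw : Z n = fun ω => ∑ k ∈ Finset.range (n + 1),
        Set.indicator {ω' | min (τ ω') n = k}
          (fun ω' => Real.exp (∑ i ∈ Finset.range k, g (X i ω')) * v (X k ω')) ω := by
      funext ω
      rw [Finset.sum_eq_single_of_mem (min (τ ω) n)
        (Finset.mem_range.mpr (Nat.lt_succ_of_le (min_le_right _ _)))]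
      · rw [Set.indicator_of_mem (by simp : ω ∈ {ω' | min (τ ω') n = min (τ ω) n})]
      · intro k _ hk
        exact Set.indicator_of_notMem (fun hmem => hk (Set.mem_setOf_eq ▸ hmem).symm) _
    rw [hrw]
    refine Finset.measurable_sum _ fun k hk => ?_
    have hkn : k ≤ n := Nat.lt_succ_iff.mp (Finset.mem_range.mp hk)
    refine Measurable.indicator ?_ ?_
    · exact ((Real.measurable_exp.comp
        (Finset.measurable_sum _ fun i hi => hgm.comp
          ((hXadapted i).mono (𝒢.mono (le_trans (Nat.le_of_lt
            (Finset.mem_range.mp hi)) hkn : i ≤ n)) le_rfl))).mul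
        (hvm.comp ((hXadapted k).mono (𝒢.mono hkn) le_rfl)))
    · have h := (hstop.min_const n).measurableSet_eq k
      have e : {ω' | min (τ ω') n = k} = {ω : Ω | min (τ ω : WithTop ℕ) n = k} := by
        ext ω; simp only [Set.mem_setOf_eq]
        rcases le_total (τ ω) n with h' | h' <;> simp [h']
      rw [e]; exact 𝒢.mono hkn _ h
  -- bound on Z n
  have hZbd : ∀ n ω, |Z n ω| ≤ Real.exp (n * Cg) * Cv := by
    intro n ω
    rw [abs_mul, abs_of_pos (Real.exp_pos _)]
    refine mul_le_mul ?_ (hvb _) (abs_nonneg _) (Real.exp_pos _).le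
    refine Real.exp_le_exp.mpr ?_
    calc ∑ i ∈ Finset.range (min (τ ω) n), g (X i ω)
        ≤ ∑ i ∈ Finset.range (min (τ ω) n), Cg :=
          Finset.sum_le_sum fun i _ => le_trans (le_abs_self _) (hgb _)
      _ = ((min (τ ω) n : ℕ) : ℝ) * Cg := by
          rw [Finset.sum_const, Finset.card_range, nsmul_eq_mul]
      _ ≤ (n : ℝ) * Cg :=
          mul_le_mul_of_nonneg_right (Nat.cast_le.mpr (min_le_right _ _)) hCg
  -- integrability helper
  have hint : ∀ (f : Ω → ℝ) (C : ℝ), Measurable f → (∀ ω, |f ω| ≤ C) →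
      Integrable f μ := by
    intro f C hf hC
    exact (integrable_const C).mono' hf.aestronglyMeasurable
      (Filter.Eventually.of_forall fun ω => by simpa [Real.norm_eq_abs] using hC ω)
  have hZint : ∀ n, Integrable (Z n) μ := fun n =>
    hint _ _ ((hZmeas n).mono (𝒢.le n) le_rfl) (hZbd n)
  refine martingale_nat (fun n => (hZmeas n).stronglyMeasurable) hZint fun n => ?_
  -- decomposition of Z (n+1)
  set A : Ω → ℝ := Set.indicator {ω | τ ω ≤ n} (Z n) with hA
  set B : Ω → ℝ := Set.indicator {ω | τ ω ≤ n}ᶜ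
      (fun ω => Real.exp (∑ i ∈ Finset.range (n + 1), g (X i ω))) with hB
  have hdecomp : ∀ ω, Z (n + 1) ω = A ω + B ω * v (X (n + 1) ω) := by
    intro ω
    by_cases h : τ ω ≤ n
    · have h1 : min (τ ω) (n + 1) = τ ω := min_eq_left (h.trans (Nat.le_succ n))
      have h2 : min (τ ω) n = τ ω := min_eq_left h
      have hmem : ω ∈ {ω' | τ ω' ≤ n} := h
      have hnot : ω ∉ {ω' | τ ω' ≤ n}ᶜ := fun hc => hc h
      have e1 : Z (n + 1) ω = Z n ω := by simp only [hZ]; rw [h1, h2]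
      rw [e1, hA, hB, Set.indicator_of_mem hmem, Set.indicator_of_notMem hnot,
        zero_mul, add_zero]
    · have h1 : min (τ ω) (n + 1) = n + 1 := min_eq_right (Nat.succ_le_of_lt (not_le.mp h))
      have hmem : ω ∈ {ω' | τ ω' ≤ n}ᶜ := h
      have hnot : ω ∉ {ω' | τ ω' ≤ n} := h
      have e1 : Z (n + 1) ω
          = Real.exp (∑ i ∈ Finset.range (n + 1), g (X i ω)) * v (X (n + 1) ω) := by
        simp only [hZ]; rw [h1]
      rw [e1, hA, hB, Set.indicator_of_notMem hnot, Set.indicator_of_mem hmem, zero_add]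
  -- measurability and integrability of the pieces
  have hAmeas : Measurable[𝒢 n] A := (hZmeas n).indicator (hstop_le n)
  have hBsum : Measurable[𝒢 n] fun ω => Real.exp (∑ i ∈ Finset.range (n + 1), g (X i ω)) :=
    Real.measurable_exp.comp (Finset.measurable_sum _ fun i hi => hgm.comp
      ((hXadapted i).mono (𝒢.mono (Nat.lt_succ_iff.mp (Finset.mem_range.mp hi))) le_rfl))
  have hBmeas : Measurable[𝒢 n] B := hBsum.indicator (hstop_le n).compl
  have hBbd : ∀ ω, |B ω| ≤ Real.exp ((n + 1 : ℕ) * Cg) := by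
    intro ω
    by_cases h : ω ∈ ({ω | τ ω ≤ n}ᶜ : Set Ω)
    · rw [hB, Set.indicator_of_mem h, abs_of_pos (Real.exp_pos _)]
      refine Real.exp_le_exp.mpr ?_
      calc ∑ i ∈ Finset.range (n + 1), g (X i ω)
          ≤ ∑ i ∈ Finset.range (n + 1), Cg :=
            Finset.sum_le_sum fun i _ => le_trans (le_abs_self _) (hgb _)
        _ = ((n + 1 : ℕ) : ℝ) * Cg := by
            rw [Finset.sum_const, Finset.card_range, nsmul_eq_mul]
    · rw [hB, Set.indicator_of_notMem h, abs_zero]; exact (Real.exp_pos _).le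
  have hAbd : ∀ ω, |A ω| ≤ Real.exp (n * Cg) * Cv := by
    intro ω
    by_cases h : ω ∈ ({ω | τ ω ≤ n} : Set Ω)
    · rw [hA, Set.indicator_of_mem h]; exact hZbd n ω
    · rw [hA, Set.indicator_of_notMem h, abs_zero]
      exact mul_nonneg (Real.exp_pos _).le hCv
  have hAint : Integrable A μ := hint _ _ (hAmeas.mono (𝒢.le n) le_rfl) hAbd
  have hBvint : Integrable (B * fun ω => v (X (n + 1) ω)) μ := by
    refine hint _ (Real.exp ((n + 1 : ℕ) * Cg) * Cv)
      ((hBmeas.mono (𝒢.le n) le_rfl).mul (hvm.comp (hXm (n + 1)))) fun ω => ?_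
    rw [Pi.mul_apply, abs_mul]
    exact mul_le_mul (hBbd ω) (hvb _) (abs_nonneg _) (Real.exp_pos _).le
  have hvXint : Integrable (fun ω => v (X (n + 1) ω)) μ :=
    hint _ Cv (hvm.comp (hXm (n + 1))) fun ω => hvb _
  -- compute the conditional expectation
  have hstep1 : Z (n + 1) = A + B * fun ω => v (X (n + 1) ω) := by
    funext ω; exact hdecomp ω
  have hce : μ[Z (n + 1) | 𝒢 n] =ᵐ[μ] A + B * fun ω => P v (X n ω) := by
    calc μ[Z (n + 1) | 𝒢 n] = μ[A + B * fun ω => v (X (n + 1) ω) | 𝒢 n] := by rw [hstep1]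
      _ =ᵐ[μ] μ[A | 𝒢 n] + μ[B * fun ω => v (X (n + 1) ω) | 𝒢 n] :=
          condExp_add hAint hBvint _
      _ =ᵐ[μ] A + B * μ[(fun ω => v (X (n + 1) ω)) | 𝒢 n] := by
          refine Filter.EventuallyEq.add
            (Filter.Eventually.of_forall (congrFun
              (condExp_of_stronglyMeasurable (𝒢.le n) hAmeas.stronglyMeasurable hAint)))
            (condExp_mul_of_stronglyMeasurable_left hBmeas.stronglyMeasurable hBvint hvXint)
      _ =ᵐ[μ] A + B * fun ω => P v (X n ω) := by
          filter_upwards [hMarkov n] with ω hω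
          simp only [Pi.add_apply, Pi.mul_apply, hω]
  -- conclude: A + B * Pv(X n) = Z n pointwise
  refine (Filter.EventuallyEq.trans hce ?_).symm
  refine Filter.Eventually.of_forall fun ω => ?_
  simp only [Pi.add_apply, Pi.mul_apply]
  by_cases h : τ ω ≤ n
  · have hmem : ω ∈ {ω' | τ ω' ≤ n} := h
    have hnot : ω ∉ {ω' | τ ω' ≤ n}ᶜ := fun hc => hc h
    rw [hA, hB, Set.indicator_of_mem hmem, Set.indicator_of_notMem hnot, zero_mul, add_zero]
  · have hn : n < τ ω := not_le.mp h
    have hmin : min (τ ω) n = n := min_eq_right hn.le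
    have hnotmem : v (X n ω) ≠ Real.exp (G (X n ω)) := by
      intro heq
      have : τ ω ≤ n := (hτ ω) ▸ Nat.sInf_le (Set.mem_setOf_eq ▸ heq)
      omega
    have hlt : v (X n ω) < Real.exp (G (X n ω)) :=
      lt_of_le_of_ne (hBellman' _) hnotmem
    have hmem : ω ∈ {ω' | τ ω' ≤ n}ᶜ := h
    have hnot : ω ∉ {ω' | τ ω' ≤ n} := h
    rw [hA, hB, Set.indicator_of_notMem hnot, Set.indicator_of_mem hmem, zero_add]
    show Real.exp (∑ i ∈ Finset.range (n + 1), g (X i ω)) * P v (X n ω) = Z n ω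
    rw [Finset.sum_range_succ, Real.exp_add, mul_assoc, ← hBellman _ hlt]
    simp only [hZ, hmin]
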